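/- Let r ≥ 2, let S be the set of pairs (i,j) with i ∈ [r], j ∈ [r+1−i], and fix integers r_1 = ⌈r/2⌉, r_2 = ⌊r/2⌋. Define a_i = r_1 − i + 1 for 1 ≤ i ≤ r_1 and a_i = 0 otherwise, and b_j = r_2 − j + 1 for 1 ≤ j ≤ r_2 and b_j = 0 otherwise (corresponding to making rows 1..r_1+1 pairwise 0-non-edges and the last r_2+1 rows pairwise 1-non-edges). Then ∑ a_i + ∑ b_j = binom(r_1+1, 2) + binom(r_2+1, 2) = N_r, and a_i + b_j ≥ r + 2 − i − j for all (i,j) ∈ S (every scarce pair is fixed). -/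

import Mathlib

open Finset

/-- `F` is a configuration in the simple matrix `A` (columns of `A` form a finset):
there is an injection of rows such that the multiset `F` of columns is a sub-multiset
of the restricted columns of `A`. -/
def ConfigIn {s k m : ℕ} (F : Multiset (Fin k → Fin s)) (A : Finset (Fin m → Fin s)) : Prop :=
  ∃ ρ : Fin k ↪ Fin m, F ≤ A.1.map (fun col => col ∘ ρ)

/-- The forbidden number: the maximum number of columns of an `m`-rowed simple
`s`-matrix avoiding `F` as a configuration. -/
noncomputable def forb (m s : ℕ) {k : ℕ} (F : Multiset (Fin k → Fin s)) : ℕ :=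
  sSup {n : ℕ | ∃ A : Finset (Fin m → Fin s), ¬ ConfigIn F A ∧ A.card = n}

/-- The 2-rowed configuration with `a` columns (0,0), `b` columns (1,0),
`c` columns (0,1) and `d` columns (1,1), viewed as a 3-matrix. -/
def Fabcd (a b c d : ℕ) : Multiset (Fin 2 → Fin 3) :=
  Multiset.replicate a ![0, 0] + Multiset.replicate b ![1, 0] +
  Multiset.replicate c ![0, 1] + Multiset.replicate d ![1, 1]

/-- `p` copies of `K₂`. -/
def pK2 (p : ℕ) : Multiset (Fin 2 → Fin 3) := Fabcd p p p p

/-- `p` copies of `I₂`. -/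
def pI2 (p : ℕ) : Multiset (Fin 2 → Fin 3) := Fabcd 0 p p 0

lemma aux_sum (r m : ℕ) (h : m ≤ r) :
    ∑ i ∈ Icc 1 r, (if i ≤ m then m + 1 - i else 0) = (m + 1).choose 2 := by
  have h1 : ∑ i ∈ Icc 1 r, (if i ≤ m then m + 1 - i else 0)
      = ∑ i ∈ Icc 1 m, (m + 1 - i) := by
    rw [← Finset.sum_subset (Icc_subset_Icc le_rfl h)]
    · apply Finset.sum_congr rfl
      intro i hi
      simp only [mem_Icc] at hi
      simp [hi.2]
    · intro i hi hni
      simp only [mem_Icc] at hi hni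
      have : ¬ i ≤ m := fun hm => hni ⟨hi.1, hm⟩
      simp [this]
  rw [h1]
  clear h1 h
  induction m with
  | zero => simp
  | succ n ih =>
      rw [Finset.sum_Icc_succ_top (by omega)]
      have : ∑ i ∈ Icc 1 n, (n + 1 + 1 - i) = ∑ i ∈ Icc 1 n, ((n + 1 - i) + 1) := by
        apply Finset.sum_congr rfl; intro i hi; simp only [mem_Icc] at hi; omega
      rw [this, Finset.sum_add_distrib, ih]
      simp [Nat.choose_two_right, Nat.card_Icc]
      ring_nf
      omega

theorem construction_fixes_all (r : ℕ) (hr : 2 ≤ r) :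
    (∑ i ∈ Finset.Icc 1 r, (if i ≤ (r + 1) / 2 then (r + 1) / 2 + 1 - i else 0))
        + (∑ j ∈ Finset.Icc 1 r, (if j ≤ r / 2 then r / 2 + 1 - j else 0))
      = Nat.choose ((r + 1) / 2 + 1) 2 + Nat.choose (r / 2 + 1) 2 ∧
    ∀ i ∈ Finset.Icc 1 r, ∀ j ∈ Finset.Icc 1 (r + 1 - i),
      r + 2 ≤ (if i ≤ (r + 1) / 2 then (r + 1) / 2 + 1 - i else 0)
        + (if j ≤ r / 2 then r / 2 + 1 - j else 0) + i + j := by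
  constructor
  · rw [aux_sum r ((r+1)/2) (by omega), aux_sum r (r/2) (by omega)]
  · intro i hi j hj
    simp only [mem_Icc] at hi hj
    split_ifs <;> omega
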